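/- In any acyclic matching W on the face poset of a regular CW complex (with empty face included), not all 0-cells can be matched with 1-cells. -/
import Mathlib


/-- A composition of `n`: an ordered list of positive integers summing to `n`. -/
def IsComposition (n : ℕ) (l : List ℕ) : Prop :=
  (∀ x ∈ l, 0 < x) ∧ l.sum = n

/-- Refinement order on compositions: `Refines x y` means `x ≤ y` in the paper's order,
i.e. the blocks of `x` are sums of consecutive runs of blocks of `y`.  The witness `P`
is the list of (nonempty) consecutive runs. -/
def Refines (x y : List ℕ) : Prop :=
  ∃ P : List (List ℕ), (∀ p ∈ P, p ≠ []) ∧ P.flatten = y ∧ P.map List.sum = x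

/-- `Dset lam` is the poset `D_λ`: all compositions lying below some composition of type `lam`. -/
def Dset (lam : Multiset ℕ) : Set (List ℕ) :=
  {x | ∃ y : List ℕ, (y : Multiset ℕ) = lam ∧ Refines x y}

/-- The set of cut positions `{i₁,…,i_{l(x)-1}}` of a refinement witness `P`. -/
def cutSet (P : List (List ℕ)) : Finset ℕ :=
  ((List.range (P.length - 1)).map (fun k => ((P.take (k + 1)).map List.length).sum)).toFinset

/-- The block at position `i` of the composition `l` is independent: any resonance with
`l[i]` on the left side forces a trivial resonance with a block on the right side. -/
def IsIndepAt (l : List ℕ) (i : ℕ) : Prop :=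
  ∀ I J : Finset ℕ, I.Nonempty → J.Nonempty → Disjoint I J →
    (∀ a ∈ I ∪ J, a < l.length) → i ∈ I →
    (I.sum fun a => l.getD a 0) = (J.sum fun a => l.getD a 0) →
    ∃ q ∈ J, l.getD q 0 = l.getD i 0

/-- `ι(x)`: the smallest index of a block of `x` equal to `v` (`⊤` if none). -/
noncomputable def iotaFn (v : ℕ) (x : List ℕ) : ℕ∞ :=
  sInf {j : ℕ∞ | ∃ k : ℕ, j = (k : ℕ∞) ∧ x.getD k 0 = v}

/-- Block `k` of `x ∈ D_λ` contains a copy of `v`: for every composition of type `lam`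
refining `x`, the run summing to block `k` contains an entry equal to `v`. -/
def HasCopy (lam : Multiset ℕ) (v : ℕ) (x : List ℕ) (k : ℕ) : Prop :=
  ∀ P : List (List ℕ), (∀ p ∈ P, p ≠ []) → ((P.flatten : Multiset ℕ) = lam) →
    P.map List.sum = x → v ∈ P.getD k []

/-- `γ(x)`: the smallest index of a block of `x` strictly larger than `v` containing
at least one copy of `v` (`⊤` if none). -/
noncomputable def gammaFn (lam : Multiset ℕ) (v : ℕ) (x : List ℕ) : ℕ∞ :=
  sInf {j : ℕ∞ | ∃ k : ℕ, j = (k : ℕ∞) ∧ v < x.getD k 0 ∧ HasCopy lam v x k}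

/-- Split block `j` of `x` into `v` followed by the remainder. -/
def splitBlock (v : ℕ) (x : List ℕ) (j : ℕ) : List ℕ :=
  x.take j ++ [v, x.getD j 0 - v] ++ x.drop (j + 1)

/-- A number partition of `n`: a multiset of positive integers summing to `n`. -/
def IsPartition (n : ℕ) (lam : Multiset ℕ) : Prop :=
  (∀ a ∈ lam, 0 < a) ∧ lam.sum = n

/-- Refinement order on number partitions: `PartCoarsen mu lam` means `lam ≥ mu`,
i.e. the blocks of `lam` can be grouped into disjoint nonempty sets summing to the
blocks of `mu`. -/
def PartCoarsen (mu lam : Multiset ℕ) : Prop :=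
  ∃ P : Multiset (Multiset ℕ), (∀ p ∈ P, p ≠ 0) ∧ P.sum = lam ∧ P.map Multiset.sum = mu

/-- The cutting condition for the pair `(lam, pb)` where `pb` is a block of `lam`. -/
def CuttingCondition (lam : Multiset ℕ) (pb : ℕ) : Prop :=
  pb ∈ lam ∧
  ∀ (mu : Multiset ℕ) (eta : ℕ) (I : Multiset ℕ),
    PartCoarsen mu lam → eta ∈ mu → I ≠ 0 → I ≤ lam.erase pb → eta = pb + I.sum →
      PartCoarsen (pb ::ₘ (I.sum ::ₘ mu.erase eta)) lam

/-- The vector in `ℚ^l` associated to the resonance `(I, J)`. -/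
def resVec (l : ℕ) (I J : Finset (Fin l)) : Fin l → ℚ :=
  fun i => if i ∈ I then 1 else if i ∈ J then -1 else 0

/-- in an acyclic matching on (the face poset of) a regular CW complex,
not all 0-cells are matched upward with 1-cells.  Formalized for an abstract finite
poset with a bottom element (the empty face): 0-cells are the elements covering the
bottom, and any 1-cell covering a 0-cell covers a second 0-cell (regularity). -/
theorem acyclic_matching_unmatched_vertex {α : Type*} [PartialOrder α] [Fintype α]
    [OrderBot α] (M : Finset (α × α))
    (hcov : ∀ p ∈ M, p.1 ⋖ p.2)
    (hdisj : ∀ p ∈ M, ∀ q ∈ M, p ≠ q →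
      p.1 ≠ q.1 ∧ p.1 ≠ q.2 ∧ p.2 ≠ q.1 ∧ p.2 ≠ q.2)
    (htwo : ∀ e v : α, ⊥ ⋖ v → v ⋖ e → ∃ w : α, w ≠ v ∧ ⊥ ⋖ w ∧ w ⋖ e)
    (hne : ∃ v : α, ⊥ ⋖ v)
    (hacyclic : ¬ ∃ (t : ℕ) (σ τ : ℕ → α), 2 ≤ t ∧ σ 0 = σ t ∧ σ 0 ≠ σ 1 ∧
      ∀ i < t, (σ i, τ i) ∈ M ∧ σ (i + 1) ⋖ τ i) :
    ∃ v : α, ⊥ ⋖ v ∧ ∀ τ : α, (v, τ) ∉ M := by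
  by_contra h
  push_neg at h
  choose F hF using h
  have hstep : ∀ (v : α) (hv : ⊥ ⋖ v), ∃ w : α, w ≠ v ∧ ⊥ ⋖ w ∧ w ⋖ F v hv :=
    fun v hv => htwo (F v hv) v hv (hcov _ (hF v hv))
  choose G hG1 hG2 hG3 using hstep
  obtain ⟨v0, hv0⟩ := hne
  let S := {v : α // ⊥ ⋖ v}
  let step : S → S := fun v => ⟨G v.1 v.2, hG2 v.1 v.2⟩
  let s : ℕ → S := fun n => step^[n] ⟨v0, hv0⟩
  have hsucc : ∀ n, s (n + 1) = step (s n) := by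
    intro n
    simp only [s, Function.iterate_succ_apply']
  have hne' : ∀ n, (s (n + 1)).1 ≠ (s n).1 := by
    intro n
    rw [hsucc]
    exact hG1 (s n).1 (s n).2
  have : ∃ i j : ℕ, i ≠ j ∧ s i = s j := Finite.exists_ne_map_eq_of_infinite s
  obtain ⟨i, j, hij, heq⟩ := this
  wlog hlt : i < j generalizing i j
  · exact this j i hij.symm heq.symm (by omega)
  have hj2 : i + 2 ≤ j := by
    rcases Nat.lt_or_ge (i + 1) j with h' | h'
    · omega
    · have : j = i + 1 := by omega
      subst this
      exact absurd (congrArg Subtype.val heq).symm (hne' i)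
  apply hacyclic
  refine ⟨j - i, fun k => (s (i + k)).1, fun k => F (s (i + k)).1 (s (i + k)).2, by omega, ?_, ?_, ?_⟩
  · show (s (i + 0)).1 = (s (i + (j - i))).1
    have h0 : i + 0 = i := by omega
    have h1 : i + (j - i) = j := by omega
    rw [h0, h1]
    simp only [heq]
  · have := hne' i
    simpa using this.symm
  · intro k _
    constructor
    · exact hF _ _
    · show (s (i + (k + 1))).1 ⋖ F (s (i + k)).1 (s (i + k)).2
      have h1 : i + (k + 1) = (i + k) + 1 := by omega
      rw [h1, hsucc]
      exact hG3 (s (i + k)).1 (s (i + k)).2
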